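/- arXiv:2401.12897 — 2 statements merged into one kernel-verified Lean document; each statement's English description precedes it below -/
import Mathlib

section
/- Let $E$ be a Hausdorff complete pseudo-$H$-space, i.e., a real or complex vector space equipped with a family $(\langle\cdot,\cdot\rangle_\alpha)_{\alpha\in I}$ of positive semi-definite inner products, endowed with the locally convex topology induced by the seminorms $p_\alpha(x)=\sqrt{\langle x,x\rangle_\alpha}$, which is assumed Hausdorff and complete. If $A$ and $B$ are closed linear subspaces of $E$ that are mutually orthogonal (i.e., $\langle a,b\rangle_\alpha = 0$ for all $a\in A$, $b\in B$, $\alpha\in I$), then the subspace $A + B$ is closed in $E$. -/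
/-- A (Hausdorff, complete) pseudo-H-space: a real or complex vector space `E` carrying a
family of positive semi-definite (pseudo-)inner products `inn α`, endowed with the topology
induced by the associated seminorms `p α x = sqrt ⟨x,x⟩_α` (expressed via `WithSeminorms`). -/
structure PseudoHSpace (𝕜 : Type*) [RCLike 𝕜] (ι E : Type*) [Nonempty ι]
    [AddCommGroup E] [Module 𝕜 E] [UniformSpace E] [IsUniformAddGroup E] where
  inn : ι → E → E → 𝕜
  p : ι → Seminorm 𝕜 E
  inn_add_left : ∀ (α : ι) (x y z : E), inn α (x + y) z = inn α x z + inn α y z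
  inn_smul_left : ∀ (α : ι) (c : 𝕜) (x y : E), inn α (c • x) y = c * inn α x y
  inn_conj_symm : ∀ (α : ι) (x y : E), (starRingEnd 𝕜) (inn α y x) = inn α x y
  inn_nonneg : ∀ (α : ι) (x : E), 0 ≤ RCLike.re (inn α x x)
  p_sq : ∀ (α : ι) (x : E), (p α x) ^ 2 = RCLike.re (inn α x x)
  topo : WithSeminorms p

/-- If `A` and `B` are mutually orthogonal closed linear subspaces of a Hausdorff complete
pseudo-H-space `E`, then `A + B` is closed. -/
theorem stmt1 {𝕜 : Type*} [RCLike 𝕜] {ι E : Type*} [Nonempty ι] [AddCommGroup E] [Module 𝕜 E]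
    [UniformSpace E] [IsUniformAddGroup E] [ContinuousSMul 𝕜 E]
    [CompleteSpace E] [T2Space E]
    (P : PseudoHSpace 𝕜 ι E) (A B : Submodule 𝕜 E)
    (hA : IsClosed (A : Set E)) (hB : IsClosed (B : Set E))
    (horth : ∀ a ∈ A, ∀ b ∈ B, ∀ α : ι, P.inn α a b = 0) :
    IsClosed ((A ⊔ B : Submodule 𝕜 E) : Set E) := by
  -- additivity on the right
  have inn_add_right : ∀ (α : ι) (x y z : E),
      P.inn α x (y + z) = P.inn α x y + P.inn α x z := by
    intro α x y z
    rw [← P.inn_conj_symm, P.inn_add_left, map_add, P.inn_conj_symm, P.inn_conj_symm]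
  -- Pythagoras for orthogonal vectors
  have key : ∀ (α : ι), ∀ a ∈ A, ∀ b ∈ B,
      P.p α a ≤ P.p α (a + b) ∧ P.p α b ≤ P.p α (a + b) := by
    intro α a ha b hb
    have hba : P.inn α b a = 0 := by
      rw [← P.inn_conj_symm, horth a ha b hb α, map_zero]
    have h1 : P.inn α (a + b) (a + b) = P.inn α a a + P.inn α b b := by
      rw [P.inn_add_left, inn_add_right, inn_add_right, horth a ha b hb α, hba]
      ring
    have h2 : (P.p α (a + b)) ^ 2 = (P.p α a) ^ 2 + (P.p α b) ^ 2 := by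
      rw [P.p_sq, P.p_sq, P.p_sq, h1, map_add]
    have hana := P.inn_nonneg α a
    have hbnb := P.inn_nonneg α b
    have ha2 : (P.p α a) ^ 2 ≤ (P.p α (a + b)) ^ 2 := by
      rw [h2, P.p_sq]; nlinarith [P.p_sq α b]
    have hb2 : (P.p α b) ^ 2 ≤ (P.p α (a + b)) ^ 2 := by
      rw [h2, P.p_sq]; nlinarith [P.p_sq α a]
    constructor
    · calc P.p α a = Real.sqrt ((P.p α a) ^ 2) := by
            rw [Real.sqrt_sq (apply_nonneg _ _)]
        _ ≤ Real.sqrt ((P.p α (a + b)) ^ 2) := Real.sqrt_le_sqrt ha2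
        _ = P.p α (a + b) := Real.sqrt_sq (apply_nonneg _ _)
    · calc P.p α b = Real.sqrt ((P.p α b) ^ 2) := by
            rw [Real.sqrt_sq (apply_nonneg _ _)]
        _ ≤ Real.sqrt ((P.p α (a + b)) ^ 2) := Real.sqrt_le_sqrt hb2
        _ = P.p α (a + b) := Real.sqrt_sq (apply_nonneg _ _)
  -- instances
  have uA : IsUniformAddGroup A :=
    IsUniformInducing.isUniformAddGroup A.subtype
      isUniformEmbedding_subtype_val.isUniformInducing
  have uB : IsUniformAddGroup B :=
    IsUniformInducing.isUniformAddGroup B.subtype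
      isUniformEmbedding_subtype_val.isUniformInducing
  have cA : CompleteSpace A := hA.completeSpace_coe
  have cB : CompleteSpace B := hB.completeSpace_coe
  -- the addition map
  set g : A × B → E := fun x => (x.1 : E) + (x.2 : E) with hgdef
  have hrange : Set.range g = ((A ⊔ B : Submodule 𝕜 E) : Set E) := by
    ext x
    rw [Submodule.coe_sup]
    constructor
    · rintro ⟨⟨a, b⟩, rfl⟩
      exact ⟨a, a.2, b, b.2, rfl⟩
    · rintro ⟨a, ha, b, hb, rfl⟩
      exact ⟨(⟨a, ha⟩, ⟨b, hb⟩), rfl⟩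
  -- `g⁻¹ (𝓝 0)` refines the neighborhoods of `0` in `A × B`
  have hcomap : Filter.comap g (nhds (0 : E)) = nhds (0 : A × B) := by
    apply le_antisymm
    · have hnA : nhds (0 : A × B) =
          Filter.comap (fun x : A × B => (x.1 : E)) (nhds (0 : E)) ⊓
            Filter.comap (fun x : A × B => (x.2 : E)) (nhds (0 : E)) := by
        rw [nhds_prod_eq, nhds_subtype_eq_comap, nhds_subtype_eq_comap,
          Filter.prod_eq_inf, Filter.comap_comap, Filter.comap_comap]
        rfl
      rw [hnA]
      have hle : ∀ (c : A × B → E),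
          (∀ x : A × B, ∀ s : Finset ι, (s.sup P.p) (c x) ≤ (s.sup P.p) (g x)) →
          Filter.comap g (nhds (0 : E)) ≤ Filter.comap c (nhds (0 : E)) := by
        intro c hc
        intro U hU
        rcases Filter.mem_comap.mp hU with ⟨V, hV, hVU⟩
        rcases P.topo.hasBasis_zero_ball.mem_iff.mp hV with ⟨⟨s, r⟩, hr, hball⟩
        refine Filter.mem_comap.mpr ⟨(s.sup P.p).ball 0 r,
          P.topo.hasBasis_zero_ball.mem_of_mem hr, ?_⟩
        intro x hx
        apply hVU
        apply hball
        simp only [Set.mem_preimage, Seminorm.mem_ball_zero] at hx ⊢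
        exact lt_of_le_of_lt (hc x s) hx
      refine le_inf (hle _ ?_) (hle _ ?_)
      · intro x s
        refine Seminorm.finset_sup_apply_le (apply_nonneg _ _) fun i hi => ?_
        have hk := key i x.1 x.1.2 x.2 x.2.2
        exact le_trans hk.1 (Seminorm.le_finset_sup_apply hi)
      · intro x s
        refine Seminorm.finset_sup_apply_le (apply_nonneg _ _) fun i hi => ?_
        have hk := key i x.1 x.1.2 x.2 x.2.2
        exact le_trans hk.2 (Seminorm.le_finset_sup_apply hi)
    · have hgc : Continuous g :=
        (continuous_subtype_val.comp continuous_fst).add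
          (continuous_subtype_val.comp continuous_snd)
      have : Filter.Tendsto g (nhds (0 : A × B)) (nhds (0 : E)) :=
        hgc.tendsto' 0 0 (by simp [hgdef])
      exact this.le_comap
  -- `g` is uniformly inducing
  have hadd : ∀ x y : A × B, g (x - y) = g x - g y := by
    intro x y
    simp only [hgdef, Prod.fst_sub, Prod.snd_sub, AddSubgroupClass.coe_sub]
    abel
  have hfun : ((fun x : E × E => x.2 - x.1) ∘ (fun x : (A × B) × (A × B) => (g x.1, g x.2)))
      = (g ∘ fun x : (A × B) × (A × B) => x.2 - x.1) := by
    funext x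
    simp only [Function.comp_apply]
    exact (hadd x.2 x.1).symm
  have hui : IsUniformInducing g := by
    constructor
    rw [uniformity_eq_comap_nhds_zero E, uniformity_eq_comap_nhds_zero (A × B),
      Filter.comap_comap, hfun, ← Filter.comap_comap, hcomap]
  have : CompleteSpace (A × B) := inferInstance
  have hcomp : IsComplete (Set.range g) := hui.isComplete_range
  rw [hrange] at hcomp
  exact hcomp.isClosed
end

section
/- Let $E$ be a Hausdorff complete pseudo-$H$-space and let $A$, $B$ be mutually orthogonal linear subspaces of $E$ with $A$ closed. Then $cl(A \oplus B) = A \oplus cl(B)$, and moreover $A$ and $cl(B)$ are mutually orthogonal. -/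
section Aux

variable {𝕜 : Type*} [RCLike 𝕜] {ι E : Type*} [Nonempty ι] [AddCommGroup E] [Module 𝕜 E]
  [UniformSpace E] [IsUniformAddGroup E] (P : PseudoHSpace 𝕜 ι E)

theorem PseudoHSpace.inn_add_right (α : ι) (x y z : E) :
    P.inn α x (y + z) = P.inn α x y + P.inn α x z := by
  rw [← P.inn_conj_symm, P.inn_add_left, map_add, P.inn_conj_symm, P.inn_conj_symm]

theorem PseudoHSpace.inn_smul_right (α : ι) (c : 𝕜) (x y : E) :
    P.inn α x (c • y) = (starRingEnd 𝕜) c * P.inn α x y := by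
  rw [← P.inn_conj_symm, P.inn_smul_left, map_mul, P.inn_conj_symm]

/-- The pseudo-inner product at index `α`, with arguments swapped to make it
conjugate-linear in the first variable, as a `PreInnerProductSpace.Core`. -/
noncomputable def PseudoHSpace.core (α : ι) : PreInnerProductSpace.Core 𝕜 E where
  inner x y := P.inn α y x
  conj_inner_symm x y := P.inn_conj_symm α y x
  re_inner_nonneg x := P.inn_nonneg α x
  add_left x y z := P.inn_add_right α z x y
  smul_left x y r := P.inn_smul_right α r y x

/-- Cauchy–Schwarz for the pseudo-inner products. -/
theorem PseudoHSpace.norm_inn_le (α : ι) (x y : E) :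
    ‖P.inn α x y‖ ≤ P.p α x * P.p α y := by
  letI c : PreInnerProductSpace.Core 𝕜 E := P.core α
  have hcs : ‖P.inn α y x‖ * ‖P.inn α x y‖ ≤
      RCLike.re (P.inn α x x) * RCLike.re (P.inn α y y) :=
    InnerProductSpace.Core.inner_mul_inner_self_le (𝕜 := 𝕜) (F := E) x y
  have hsymm : ‖P.inn α y x‖ = ‖P.inn α x y‖ := by
    rw [← P.inn_conj_symm α y x, RCLike.norm_conj]
  rw [hsymm, ← P.p_sq, ← P.p_sq] at hcs
  nlinarith [norm_nonneg (P.inn α x y), apply_nonneg (P.p α) x, apply_nonneg (P.p α) y,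
    mul_nonneg (apply_nonneg (P.p α) x) (apply_nonneg (P.p α) y)]

/-- Pythagoras-type inequality: if `a ⟂ b` then `p α a ≤ p α (a + b)`. -/
theorem PseudoHSpace.p_le_p_add (α : ι) {a b : E} (h : P.inn α a b = 0) :
    P.p α a ≤ P.p α (a + b) := by
  have hba : P.inn α b a = 0 := by rw [← P.inn_conj_symm, h, map_zero]
  have hexp : P.inn α (a + b) (a + b) = P.inn α a a + P.inn α b b := by
    rw [P.inn_add_left, P.inn_add_right, P.inn_add_right, h, hba]
    ring
  have hsq : (P.p α (a + b)) ^ 2 = (P.p α a) ^ 2 + (P.p α b) ^ 2 := by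
    rw [P.p_sq, P.p_sq, P.p_sq, hexp, map_add]
  nlinarith [apply_nonneg (P.p α) a, apply_nonneg (P.p α) b, apply_nonneg (P.p α) (a + b)]

theorem PseudoHSpace.inn_sub_right (α : ι) (x y z : E) :
    P.inn α x (y - z) = P.inn α x y - P.inn α x z := by
  have := P.inn_add_right α x (y - z) z
  simp only [sub_add_cancel] at this
  linear_combination -this

/-- Continuity of the pseudo-inner product in its second variable. -/
theorem PseudoHSpace.continuous_inn (α : ι) (a : E) :
    Continuous fun y => P.inn α a y := by
  rw [continuous_iff_continuousAt]
  intro y0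
  have hp : Continuous (P.p α) := P.topo.continuous_seminorm α
  have h1 : Filter.Tendsto (fun y => P.p α (y - y0)) (nhds y0) (nhds 0) := by
    have hsub : Continuous fun y : E => y - y0 := continuous_id.sub continuous_const
    have h := (hp.comp hsub).tendsto y0
    simpa [Function.comp_def] using h
  have h2 : Filter.Tendsto (fun y => ‖P.inn α a y - P.inn α a y0‖) (nhds y0) (nhds 0) := by
    have hb : Filter.Tendsto (fun y => P.p α a * P.p α (y - y0)) (nhds y0) (nhds 0) := by
      simpa using h1.const_mul (P.p α a)
    refine squeeze_zero (fun y => norm_nonneg _) (fun y => ?_) hb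
    rw [← P.inn_sub_right]
    exact P.norm_inn_le α a (y - y0)
  exact tendsto_iff_norm_sub_tendsto_zero.mpr h2

end Aux

/-- If `A` and `B` are mutually orthogonal linear subspaces of a Hausdorff complete
pseudo-H-space `E` with `A` closed, then `cl(A ⊕ B) = A ⊕ cl(B)`, and moreover `A` and
`cl(B)` are mutually orthogonal. -/
theorem stmt2 {𝕜 : Type*} [RCLike 𝕜] {ι E : Type*} [Nonempty ι] [AddCommGroup E] [Module 𝕜 E]
    [UniformSpace E] [IsUniformAddGroup E] [ContinuousSMul 𝕜 E]
    [CompleteSpace E] [T2Space E]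
    (P : PseudoHSpace 𝕜 ι E) (A B : Submodule 𝕜 E)
    (hA : IsClosed (A : Set E))
    (horth : ∀ a ∈ A, ∀ b ∈ B, ∀ α : ι, P.inn α a b = 0) :
    (A ⊔ B).topologicalClosure = A ⊔ B.topologicalClosure ∧
      (∀ a ∈ A, ∀ c ∈ B.topologicalClosure, ∀ α : ι, P.inn α a c = 0) := by
  -- orthogonality extends to the closure of `B`
  have horth' : ∀ a ∈ A, ∀ c ∈ B.topologicalClosure, ∀ α : ι, P.inn α a c = 0 := by
    intro a ha c hc α
    have hcl : c ∈ closure (B : Set E) := hc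
    have hclosed : IsClosed {y : E | P.inn α a y = 0} :=
      isClosed_singleton.preimage (P.continuous_inn α a)
    have hsub : (B : Set E) ⊆ {y : E | P.inn α a y = 0} := fun b hb => horth a ha b hb α
    exact closure_minimal hsub hclosed hcl
  refine ⟨le_antisymm ?_ ?_, horth'⟩
  · -- cl(A ⊔ B) ≤ A ⊔ cl(B)
    intro x hx
    have hx' : x ∈ closure ((A ⊔ B : Submodule 𝕜 E) : Set E) := hx
    -- the projection onto the `A`-component of a decomposition
    have hdec : ∀ u : E, ∃ y : E, u ∈ A ⊔ B → y ∈ A ∧ u - y ∈ B := by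
      intro u
      by_cases h : u ∈ A ⊔ B
      · obtain ⟨y, hy, z, hz, rfl⟩ := Submodule.mem_sup.mp h
        exact ⟨y, fun _ => ⟨hy, by simpa using hz⟩⟩
      · exact ⟨0, fun h' => absurd h' h⟩
    choose g hg using hdec
    -- the contraction property of `g`
    have hcontr : ∀ (α : ι) (u v : E), u ∈ A ⊔ B → v ∈ A ⊔ B →
        P.p α (g u - g v) ≤ P.p α (u - v) := by
      intro α u v hu hv
      have ha : g u - g v ∈ A := A.sub_mem (hg u hu).1 (hg v hv).1
      have hb : (u - g u) - (v - g v) ∈ B := B.sub_mem (hg u hu).2 (hg v hv).2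
      have horth0 : P.inn α (g u - g v) ((u - g u) - (v - g v)) = 0 :=
        horth _ ha _ hb α
      have h := P.p_le_p_add α horth0
      have heq : (g u - g v) + ((u - g u) - (v - g v)) = u - v := by abel
      rwa [heq] at h
    set F : Filter E := nhds x ⊓ Filter.principal ((A ⊔ B : Submodule 𝕜 E) : Set E) with hF
    have hne : F.NeBot := mem_closure_iff_clusterPt.mp hx'
    have hFle : F ≤ nhds x := inf_le_left
    have hFmem : ((A ⊔ B : Submodule 𝕜 E) : Set E) ∈ F :=
      Filter.mem_inf_of_right (Filter.mem_principal_self _)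
    have hFC : Cauchy F := cauchy_nhds.mono hFle
    -- basis of the uniformity
    have hU : (uniformity E).HasBasis (fun s : Set E => s ∈ SeminormFamily.basisSets P.p)
        (fun s => {q : E × E | q.2 - q.1 ∈ s}) := by
      rw [uniformity_eq_comap_nhds_zero E]
      exact P.topo.hasBasis.comap _
    -- `map g F` is Cauchy
    have hCg : Cauchy (Filter.map g F) := by
      rw [hU.cauchy_iff]
      refine ⟨Filter.NeBot.map hne g, fun s hs => ?_⟩
      obtain ⟨i, r, hr, rfl⟩ := (SeminormFamily.basisSets_iff P.p).mp hs
      obtain ⟨-, hC⟩ := hU.cauchy_iff.mp hFC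
      obtain ⟨t, ht, htball⟩ := hC _ hs
      refine ⟨g '' (t ∩ ((A ⊔ B : Submodule 𝕜 E) : Set E)),
        Filter.image_mem_map (Filter.inter_mem ht hFmem), ?_⟩
      rintro _ ⟨u, ⟨hut, huAB⟩, rfl⟩ _ ⟨v, ⟨hvt, hvAB⟩, rfl⟩
      have hmem : (u, v) ∈ {q : E × E | q.2 - q.1 ∈ Seminorm.ball (i.sup P.p) 0 r} :=
        htball u hut v hvt
      have hlt : (i.sup P.p) (v - u) < r := by
        have := hmem
        rwa [Set.mem_setOf_eq, Seminorm.mem_ball_zero] at this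
      show g v - g u ∈ Seminorm.ball (i.sup P.p) 0 r
      rw [Seminorm.mem_ball_zero]
      refine Seminorm.finset_sup_apply_lt hr fun j hj => ?_
      calc P.p j (g v - g u) ≤ P.p j (v - u) := hcontr j v u hvAB huAB
        _ ≤ (i.sup P.p) (v - u) := Seminorm.le_finset_sup_apply hj
        _ < r := hlt
    obtain ⟨a, hga⟩ := CompleteSpace.complete hCg
    have htg : Filter.Tendsto g F (nhds a) := hga
    -- `a ∈ A`
    have haA : a ∈ A := by
      have hev : ∀ᶠ u in F, g u ∈ (A : Set E) := by
        filter_upwards [hFmem] with u hu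
        exact (hg u hu).1
      have : a ∈ closure (A : Set E) := mem_closure_of_tendsto htg hev
      rwa [hA.closure_eq] at this
    -- `x - a ∈ cl B`
    have htid : Filter.Tendsto (fun u : E => u) F (nhds x) := hFle
    have htb : Filter.Tendsto (fun u : E => u - g u) F (nhds (x - a)) := htid.sub htg
    have hxaB : x - a ∈ B.topologicalClosure := by
      have hev : ∀ᶠ u in F, u - g u ∈ (B : Set E) := by
        filter_upwards [hFmem] with u hu
        exact (hg u hu).2
      have : x - a ∈ closure (B : Set E) := mem_closure_of_tendsto htb hev
      exact this
    have : x = a + (x - a) := by abel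
    rw [this]
    exact Submodule.add_mem_sup haA hxaB
  · -- A ⊔ cl(B) ≤ cl(A ⊔ B)
    refine sup_le ?_ ?_
    · exact le_trans le_sup_left (Submodule.le_topologicalClosure _)
    · exact Submodule.topologicalClosure_mono le_sup_right
end
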